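/- Let f(x) = x(1+x)/(1-x), g(x) = 1/(1-x), and φ(x) = (1-x-√(1-6x+x²))/2 over ℚ. Then φ(x)·φ'(x)·g(φ(x))/f(φ(x)) = 1/√(1-6x+x²) as formal power series. -/

import Mathlib

open PowerSeries

/-- Composition `f ∘ a` of formal power series (intended for `a` with zero constant term). -/
noncomputable def psComp {R : Type*} [CommRing R] (f a : R⟦X⟧) : R⟦X⟧ :=
  PowerSeries.mk fun n => ∑ i ∈ Finset.range (n + 1), PowerSeries.coeff i f * PowerSeries.coeff n (a ^ i)

section Aux

variable {R : Type*} [CommRing R]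

lemma coeff_pow_zero_of_lt {a : R⟦X⟧} (ha : constantCoeff a = 0) :
    ∀ {i n : ℕ}, n < i → PowerSeries.coeff n (a ^ i) = 0 := by
  intro i
  induction i with
  | zero => intro n hn; omega
  | succ i ih =>
    intro n hn
    rw [pow_succ, PowerSeries.coeff_mul]
    apply Finset.sum_eq_zero
    rintro ⟨p, q⟩ hpq
    rw [Finset.HasAntidiagonal.mem_antidiagonal] at hpq
    rcases lt_or_ge p i with h | h
    · rw [ih h, zero_mul]
    · have hq : q = 0 := by omega
      subst hq
      rw [PowerSeries.coeff_zero_eq_constantCoeff, ha, mul_zero]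

lemma coeff_aeval {a : R⟦X⟧} (ha : constantCoeff a = 0) (P : Polynomial R) (n : ℕ) :
    PowerSeries.coeff n (Polynomial.aeval a P) =
      ∑ i ∈ Finset.range (n + 1), P.coeff i * PowerSeries.coeff n (a ^ i) := by
  rw [Polynomial.aeval_def, Polynomial.eval₂_eq_sum, Polynomial.sum, map_sum]
  have key : ∀ i, PowerSeries.coeff n (algebraMap R R⟦X⟧ (P.coeff i) * a ^ i)
      = P.coeff i * PowerSeries.coeff n (a ^ i) := by
    intro i
    rw [← PowerSeries.C_eq_algebraMap, PowerSeries.coeff_C_mul]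
  simp_rw [key]
  set t : ℕ → R := fun i => P.coeff i * PowerSeries.coeff n (a ^ i) with ht
  have h1 : ∑ i ∈ P.support, t i = ∑ i ∈ P.support ∪ Finset.range (n + 1), t i := by
    apply Finset.sum_subset Finset.subset_union_left
    intro i _ hi
    simp only [ht, Polynomial.notMem_support_iff.mp hi, zero_mul]
  have h2 : ∑ i ∈ Finset.range (n + 1), t i = ∑ i ∈ P.support ∪ Finset.range (n + 1), t i := by
    apply Finset.sum_subset Finset.subset_union_right
    intro i _ hi
    rw [Finset.mem_range, not_lt] at hi
    simp only [ht, coeff_pow_zero_of_lt ha (by omega : n < i), mul_zero]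
  rw [h1, h2]

lemma coeff_psComp (f a : R⟦X⟧) (n : ℕ) :
    PowerSeries.coeff n (psComp f a) =
      ∑ i ∈ Finset.range (n + 1), PowerSeries.coeff i f * PowerSeries.coeff n (a ^ i) := by
  simp [psComp]

lemma coeff_psComp_eq_aeval {a : R⟦X⟧} (ha : constantCoeff a = 0) (f : R⟦X⟧)
    {n m : ℕ} (h : n < m) :
    PowerSeries.coeff n (psComp f a) =
      PowerSeries.coeff n (Polynomial.aeval a (trunc m f)) := by
  rw [coeff_aeval ha, coeff_psComp]
  apply Finset.sum_congr rfl
  intro i hi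
  rw [Finset.mem_range] at hi
  rw [coeff_trunc, if_pos (by omega)]

lemma psComp_mul {a : R⟦X⟧} (ha : constantCoeff a = 0) (f g : R⟦X⟧) :
    psComp (f * g) a = psComp f a * psComp g a := by
  ext n
  rw [PowerSeries.coeff_mul]
  have hr : ∑ p ∈ Finset.HasAntidiagonal.antidiagonal n,
      PowerSeries.coeff p.1 (psComp f a) * PowerSeries.coeff p.2 (psComp g a)
      = ∑ p ∈ Finset.HasAntidiagonal.antidiagonal n,
      PowerSeries.coeff p.1 (Polynomial.aeval a (trunc (n+1) f)) *
        PowerSeries.coeff p.2 (Polynomial.aeval a (trunc (n+1) g)) := by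
    apply Finset.sum_congr rfl
    rintro ⟨p, q⟩ hpq
    rw [Finset.HasAntidiagonal.mem_antidiagonal] at hpq
    rw [coeff_psComp_eq_aeval ha f (show p < n + 1 by omega),
      coeff_psComp_eq_aeval ha g (show q < n + 1 by omega)]
  rw [hr, ← PowerSeries.coeff_mul, ← map_mul,
    coeff_psComp_eq_aeval ha (f * g) (Nat.lt_succ_self n),
    coeff_aeval ha, coeff_aeval ha]
  apply Finset.sum_congr rfl
  intro i hi
  rw [Finset.mem_range] at hi
  congr 1
  rw [coeff_trunc, if_pos (by omega), PowerSeries.coeff_mul, Polynomial.coeff_mul]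
  apply Finset.sum_congr rfl
  rintro ⟨p, q⟩ hpq
  rw [Finset.HasAntidiagonal.mem_antidiagonal] at hpq
  rw [coeff_trunc, coeff_trunc, if_pos (by omega), if_pos (by omega)]

lemma psComp_one (a : R⟦X⟧) : psComp 1 a = 1 := by
  ext n
  rw [coeff_psComp, Finset.sum_eq_single 0]
  · simp
  · intro i _ hi
    simp [PowerSeries.coeff_one, hi]
  · intro h
    simp at h

lemma psComp_X {a : R⟦X⟧} (ha : constantCoeff a = 0) : psComp X a = a := by
  ext n
  rw [coeff_psComp, Finset.sum_eq_single 1]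
  · simp
  · intro i _ hi
    simp [PowerSeries.coeff_X, hi]
  · intro h
    rw [Finset.mem_range, not_lt] at h
    have hn : n = 0 := by omega
    subst hn
    simp [PowerSeries.coeff_zero_eq_constantCoeff, ha]

lemma psComp_add (f g a : R⟦X⟧) : psComp (f + g) a = psComp f a + psComp g a := by
  ext n
  simp [coeff_psComp, add_mul, Finset.sum_add_distrib]

lemma derivativeFun_sub (f g : R⟦X⟧) :
    derivativeFun (f - g) = derivativeFun f - derivativeFun g := by
  exact map_sub (d⁄dX R) f g

lemma derivativeFun_mul' (f g : R⟦X⟧) :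
    derivativeFun (f * g) = f * derivativeFun g + g * derivativeFun f := by
  rw [derivativeFun_mul, smul_eq_mul, smul_eq_mul]

lemma derivativeFun_X : derivativeFun (X : R⟦X⟧) = 1 := derivative_X

end Aux

theorem stmt10 (s φ : ℚ⟦X⟧)
    (hs : s ^ 2 = 1 - 6 * X + X ^ 2) (hs0 : PowerSeries.constantCoeff s = 1)
    (hφ : 2 * φ = 1 - X - s) :
    φ * PowerSeries.derivativeFun φ * psComp ((1 - X : ℚ⟦X⟧)⁻¹) φ * s =
      psComp (X * (1 + X) * (1 - X : ℚ⟦X⟧)⁻¹) φ := by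
  -- constant coefficient of φ is zero
  have hφ0 : constantCoeff φ = 0 := by
    have h0 := congrArg (constantCoeff) hφ
    simp only [map_mul, map_sub, map_one, constantCoeff_X, hs0, map_ofNat] at h0
    linarith
  -- constants as C
  have hc6 : (6 : ℚ⟦X⟧) = C 6 := (map_ofNat C 6).symm
  have hc2 : (2 : ℚ⟦X⟧) = C 2 := (map_ofNat C 2).symm
  -- derivative of hs : 2 s s' = -6 + 2X
  have hds : s * derivativeFun s + s * derivativeFun s = -6 + (X + X) := by
    have h1 := congrArg derivativeFun hs
    rw [pow_two, pow_two, derivativeFun_mul', derivativeFun_add, derivativeFun_sub,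
      derivativeFun_one, derivativeFun_mul', derivativeFun_mul', hc6, (show derivativeFun (C (6:ℚ)) = 0 from derivative_C),
      derivativeFun_X] at h1
    rw [← hc6] at h1
    linear_combination h1
  -- derivative of hφ : 2 φ' = -1 - s'
  have hdφ : 2 * derivativeFun φ = -1 - derivativeFun s := by
    have h2 := congrArg derivativeFun hφ
    rw [derivativeFun_mul', derivativeFun_sub, derivativeFun_sub, derivativeFun_one,
      derivativeFun_X, hc2, (show derivativeFun (C (2:ℚ)) = 0 from derivative_C)] at h2
    rw [← hc2] at h2
    linear_combination h2
  -- key identity : φ' * s = 1 + φ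
  have hkey : derivativeFun φ * s = 1 + φ := by
    have h4ne : (4 : ℚ⟦X⟧) ≠ 0 := by
      intro h
      have := congrArg (constantCoeff) h
      simp [map_ofNat] at this
    apply mul_left_cancel₀ h4ne
    linear_combination (2 * s) * hdφ - hds - 2 * hφ
  -- decompose the right-hand psComp
  have hrhs : psComp (X * (1 + X) * (1 - X : ℚ⟦X⟧)⁻¹) φ
      = φ * (1 + φ) * psComp ((1 - X : ℚ⟦X⟧)⁻¹) φ := by
    rw [psComp_mul hφ0, psComp_mul hφ0, psComp_X hφ0]
    have : psComp (1 + X) φ = 1 + φ := by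
      rw [psComp_add, psComp_one, psComp_X hφ0]
    rw [this]
  rw [hrhs]
  calc φ * derivativeFun φ * psComp ((1 - X : ℚ⟦X⟧)⁻¹) φ * s
      = φ * (derivativeFun φ * s) * psComp ((1 - X : ℚ⟦X⟧)⁻¹) φ := by ring
    _ = φ * (1 + φ) * psComp ((1 - X : ℚ⟦X⟧)⁻¹) φ := by rw [hkey]
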